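/- A G-graded commutative ring R is a Gelfand graded ring if and only if for any two disjoint Zariski closed subsets F, F' of GMax(R), there exist homogeneous elements r, r' ∈ h(R) with rr' = 0, r ∉ ⋃_{M∈F} M and r' ∉ ⋃_{M'∈F'} M'. -/

import Mathlib

section GradedGelfand

variable {G : Type*} [AddGroup G] [DecidableEq G] {R : Type*} [CommRing R]
variable (𝒜 : G → AddSubgroup R) [GradedRing 𝒜]

/-- A homogeneous (graded) prime ideal: a proper graded ideal that is prime
with respect to homogeneous elements. -/
def IsGradedPrime (P : Ideal R) : Prop :=
  P.IsHomogeneous 𝒜 ∧ P ≠ ⊤ ∧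
    ∀ a b : R, SetLike.IsHomogeneousElem 𝒜 a → SetLike.IsHomogeneousElem 𝒜 b →
      a * b ∈ P → a ∈ P ∨ b ∈ P

/-- A graded maximal ideal: a proper graded ideal maximal among proper graded ideals. -/
def IsGradedMaximal (M : Ideal R) : Prop :=
  M.IsHomogeneous 𝒜 ∧ M ≠ ⊤ ∧
    ∀ J : Ideal R, J.IsHomogeneous 𝒜 → M ≤ J → J ≠ ⊤ → J = M

/-- The homogeneous prime spectrum of a graded ring. -/
def GSpec := { P : Ideal R // IsGradedPrime 𝒜 P }

/-- The Zariski topology on the homogeneous prime spectrum, generated by the basic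
open sets `D_G(r)` for homogeneous `r`; the closed sets are exactly the `V_G(I)`
for graded ideals `I`. -/
instance : TopologicalSpace (GSpec 𝒜) :=
  TopologicalSpace.generateFrom
    { U | ∃ r : R, SetLike.IsHomogeneousElem 𝒜 r ∧ U = { P : GSpec 𝒜 | r ∉ P.1 } }

/-- The set of graded maximal ideals inside the homogeneous prime spectrum. -/
def GMax : Set (GSpec 𝒜) := { P | IsGradedMaximal 𝒜 P.1 }

/-- A Gelfand graded ring: every homogeneous prime ideal is contained in a unique
graded maximal ideal. -/
def IsGelfandGraded : Prop :=
  ∀ P : Ideal R, IsGradedPrime 𝒜 P →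
    ∃! M : Ideal R, IsGradedMaximal 𝒜 M ∧ P ≤ M

/-- A pm⁺ graded ring: for every homogeneous prime `P`, the homogeneous primes
containing `P` form a chain. -/
def IsPMPlusGraded : Prop :=
  ∀ P Q Q' : Ideal R, IsGradedPrime 𝒜 P → IsGradedPrime 𝒜 Q → IsGradedPrime 𝒜 Q' →
    P ≤ Q → P ≤ Q' → Q ≤ Q' ∨ Q' ≤ Q

end GradedGelfand

section Aux

open DirectSum

variable {G : Type*} [AddGroup G] [DecidableEq G] {R : Type*} [CommRing R]
variable (𝒜 : G → AddSubgroup R) [GradedRing 𝒜]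

lemma exists_homog_not_mem {I P : Ideal R} (hI : I.IsHomogeneous 𝒜)
    (h : ¬ I ≤ P) : ∃ r, SetLike.IsHomogeneousElem 𝒜 r ∧ r ∈ I ∧ r ∉ P := by
  classical
  obtain ⟨x, hxI, hxP⟩ := SetLike.not_le_iff_exists.mp h
  by_contra hc
  push_neg at hc
  apply hxP
  rw [← DirectSum.sum_support_decompose 𝒜 x]
  exact Ideal.sum_mem _ fun i _ => hc _ ⟨i, SetLike.coe_mem _⟩ (hI i hxI)

lemma exists_gradedMaximal_ge {I : Ideal R} (hI : I.IsHomogeneous 𝒜) (hne : I ≠ ⊤) :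
    ∃ M, IsGradedMaximal 𝒜 M ∧ I ≤ M := by
  obtain ⟨m, him, hmem, hmax⟩ := zorn_le_nonempty₀
    {J : Ideal R | J.IsHomogeneous 𝒜 ∧ (1:R) ∉ J}
    (fun c hcs hchain y hy => by
      refine ⟨sSup c, ⟨?_, ?_⟩, fun z hz => le_sSup hz⟩
      · intro i r hr
        obtain ⟨J, hJ, hrJ⟩ :=
          (Submodule.mem_sSup_of_directed ⟨y, hy⟩ hchain.directedOn).mp hr
        exact le_sSup hJ ((hcs hJ).1 i hrJ)
      · intro h1
        obtain ⟨J, hJ, h1J⟩ :=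
          (Submodule.mem_sSup_of_directed ⟨y, hy⟩ hchain.directedOn).mp h1
        exact (hcs hJ).2 h1J)
    I ⟨hI, (Ideal.ne_top_iff_one I).mp hne⟩
  refine ⟨m, ⟨hmem.1, (Ideal.ne_top_iff_one m).mpr hmem.2, ?_⟩, him⟩
  intro J hJ hmJ hJtop
  exact le_antisymm (hmax ⟨hJ, (Ideal.ne_top_iff_one J).mp hJtop⟩ hmJ) hmJ

lemma exists_gradedPrime_disjoint (S : Set R)
    (hmul : ∀ s ∈ S, ∀ t ∈ S, s * t ∈ S) (h1 : (1:R) ∈ S) (h0 : (0:R) ∉ S) :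
    ∃ P, IsGradedPrime 𝒜 P ∧ ∀ s ∈ S, s ∉ P := by
  obtain ⟨m, -, hmem, hmax⟩ := zorn_le_nonempty₀
    {J : Ideal R | J.IsHomogeneous 𝒜 ∧ ∀ s ∈ S, s ∉ J}
    (fun c hcs hchain y hy => by
      refine ⟨sSup c, ⟨?_, ?_⟩, fun z hz => le_sSup hz⟩
      · intro i r hr
        obtain ⟨J, hJ, hrJ⟩ :=
          (Submodule.mem_sSup_of_directed ⟨y, hy⟩ hchain.directedOn).mp hr
        exact le_sSup hJ ((hcs hJ).1 i hrJ)
      · intro s hs hsm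
        obtain ⟨J, hJ, hsJ⟩ :=
          (Submodule.mem_sSup_of_directed ⟨y, hy⟩ hchain.directedOn).mp hsm
        exact (hcs hJ).2 s hs hsJ)
    ⊥ ⟨Ideal.IsHomogeneous.bot 𝒜,
       fun s hs hsb => h0 ((Submodule.mem_bot R).mp hsb ▸ hs)⟩
  refine ⟨m, ⟨hmem.1, fun htop => hmem.2 1 h1 (htop ▸ Submodule.mem_top), ?_⟩, hmem.2⟩
  intro u v hu hv huv
  by_contra hcon
  push_neg at hcon
  obtain ⟨huP, hvP⟩ := hcon
  have hbig : ∀ w : R, SetLike.IsHomogeneousElem 𝒜 w → w ∉ m → ∃ s ∈ S, s ∈ m ⊔ Ideal.span {w} := by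
    intro w hw hwm
    by_contra hd
    push_neg at hd
    have hhom : (m ⊔ Ideal.span {w}).IsHomogeneous 𝒜 :=
      hmem.1.sup (Ideal.homogeneous_span 𝒜 {w} (by
        rintro x hx
        rw [Set.mem_singleton_iff] at hx
        subst hx; exact hw))
    have hle : m ⊔ Ideal.span {w} ≤ m := hmax ⟨hhom, hd⟩ le_sup_left
    exact hwm (hle (Ideal.mem_sup_right (Ideal.subset_span (Set.mem_singleton w))))
  obtain ⟨s₁, hs₁, hs₁m⟩ := hbig u hu huP
  obtain ⟨s₂, hs₂, hs₂m⟩ := hbig v hv hvP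
  obtain ⟨p, hp, z₁, hz₁, hpz₁⟩ := Submodule.mem_sup.mp hs₁m
  obtain ⟨q, hq, z₂, hz₂, hpz₂⟩ := Submodule.mem_sup.mp hs₂m
  obtain ⟨c, hc⟩ := Ideal.mem_span_singleton'.mp hz₁
  obtain ⟨d, hd⟩ := Ideal.mem_span_singleton'.mp hz₂
  have hm12 : s₁ * s₂ ∈ m := by
    have heq : s₁ * s₂ = p * (q + d * v) + q * (c * u) + (c * d) * (u * v) := by
      rw [← hpz₁, ← hpz₂, ← hc, ← hd]; ring
    rw [heq]
    exact Ideal.add_mem _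
      (Ideal.add_mem _ (Ideal.mul_mem_right _ _ hp) (Ideal.mul_mem_right _ _ hq))
      (Ideal.mul_mem_left _ _ huv)
  exact hmem.2 _ (hmul s₁ hs₁ s₂ hs₂) hm12

lemma gradedMaximal_isGradedPrime {M : Ideal R} (hM : IsGradedMaximal 𝒜 M) :
    IsGradedPrime 𝒜 M := by
  refine ⟨hM.1, hM.2.1, ?_⟩
  intro u v hu hv huv
  by_contra h
  push_neg at h
  obtain ⟨huM, hvM⟩ := h
  have hsup : M ⊔ Ideal.span {u} = ⊤ := by
    by_contra htop
    have hhom : (M ⊔ Ideal.span {u}).IsHomogeneous 𝒜 :=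
      hM.1.sup (Ideal.homogeneous_span 𝒜 {u} (by
        rintro x hx
        rw [Set.mem_singleton_iff] at hx
        subst hx; exact hu))
    have heq := hM.2.2 _ hhom le_sup_left htop
    exact huM (heq ▸ Ideal.mem_sup_right (Ideal.subset_span (Set.mem_singleton u)))
  have h1 : (1:R) ∈ M ⊔ Ideal.span {u} := hsup ▸ Submodule.mem_top
  obtain ⟨p, hp, z, hz, hpz⟩ := Submodule.mem_sup.mp h1
  obtain ⟨c, hc⟩ := Ideal.mem_span_singleton'.mp hz
  apply hvM
  have hveq : v = p * v + c * (u * v) := by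
    linear_combination (-v) * hpz - v * hc
  rw [hveq]
  exact Ideal.add_mem _ (Ideal.mul_mem_right _ _ hp) (Ideal.mul_mem_left _ _ huv)

lemma isOpen_Dg {r : R} (hr : SetLike.IsHomogeneousElem 𝒜 r) :
    IsOpen {P : GSpec 𝒜 | r ∉ P.1} :=
  TopologicalSpace.isOpen_generateFrom_of_mem ⟨r, hr, rfl⟩

lemma isClosed_Vg {I : Ideal R} (hI : I.IsHomogeneous 𝒜) :
    IsClosed {P : GSpec 𝒜 | I ≤ P.1} := by
  rw [← isOpen_compl_iff]
  have heq : {P : GSpec 𝒜 | I ≤ P.1}ᶜ =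
      ⋃ r : {r : R // SetLike.IsHomogeneousElem 𝒜 r ∧ r ∈ I}, {P : GSpec 𝒜 | (r : R) ∉ P.1} := by
    ext P
    simp only [Set.mem_compl_iff, Set.mem_setOf_eq, Set.mem_iUnion]
    constructor
    · intro h
      obtain ⟨r, hr, hrI, hrP⟩ := exists_homog_not_mem 𝒜 hI h
      exact ⟨⟨r, hr, hrI⟩, hrP⟩
    · rintro ⟨⟨r, hr, hrI⟩, hrP⟩ hle
      exact hrP (hle hrI)
  rw [heq]
  exact isOpen_iUnion fun r => isOpen_Dg 𝒜 r.2.1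

lemma exists_basic_nbhd {U : Set (GSpec 𝒜)}
    (hU : TopologicalSpace.GenerateOpen
      { V | ∃ r : R, SetLike.IsHomogeneousElem 𝒜 r ∧ V = { P : GSpec 𝒜 | r ∉ P.1 } } U) :
    ∀ P ∈ U, ∃ r : R, SetLike.IsHomogeneousElem 𝒜 r ∧ r ∉ P.1 ∧ {Q : GSpec 𝒜 | r ∉ Q.1} ⊆ U := by
  induction hU with
  | basic V hV =>
      obtain ⟨r, hr, rfl⟩ := hV
      exact fun P hP => ⟨r, hr, hP, subset_rfl⟩
  | univ =>
      exact fun P _ => ⟨1, SetLike.isHomogeneousElem_one 𝒜,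
        fun h => P.2.2.1 ((Ideal.eq_top_iff_one _).mpr h), Set.subset_univ _⟩
  | inter V W hV hW ihV ihW =>
      intro P hP
      obtain ⟨r, hr, hrP, hrs⟩ := ihV P hP.1
      obtain ⟨s, hs, hsP, hss⟩ := ihW P hP.2
      refine ⟨r * s, SetLike.IsHomogeneousElem.mul hr hs, ?_, ?_⟩
      · intro h
        rcases P.2.2.2 r s hr hs h with h' | h'
        · exact hrP h'
        · exact hsP h'
      · intro Q hQ
        exact ⟨hrs fun h => hQ (Ideal.mul_mem_right _ _ h),
               hss fun h => hQ (Ideal.mul_mem_left _ _ h)⟩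
  | sUnion 𝒮 h ih =>
      rintro P ⟨t, ht, hPt⟩
      obtain ⟨r, hr, hrP, hsub⟩ := ih t ht P hPt
      exact ⟨r, hr, hrP, hsub.trans (Set.subset_sUnion_of_mem ht)⟩

lemma isClosed_eq_Vg {C : Set (GSpec 𝒜)} (hC : IsClosed C) :
    ∃ I : Ideal R, I.IsHomogeneous 𝒜 ∧ C = {P : GSpec 𝒜 | I ≤ P.1} := by
  set s : Set R := {r | SetLike.IsHomogeneousElem 𝒜 r ∧ {Q : GSpec 𝒜 | r ∉ Q.1} ⊆ Cᶜ} with hs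
  refine ⟨Ideal.span s, Ideal.homogeneous_span 𝒜 s (fun x hx => hx.1), ?_⟩
  ext P
  simp only [Set.mem_setOf_eq]
  constructor
  · intro hP
    rw [Ideal.span_le]
    intro r hr
    by_contra hrP
    exact hr.2 hrP hP
  · intro hP
    by_contra hPC
    obtain ⟨r, hr, hrP, hsub⟩ := exists_basic_nbhd 𝒜 hC.isOpen_compl P hPC
    exact hrP (hP (Ideal.subset_span ⟨hr, hsub⟩))

end Aux

section Key

open DirectSum

variable {G : Type*} [AddGroup G] [DecidableEq G] {R : Type*} [CommRing R]
variable (𝒜 : G → AddSubgroup R) [GradedRing 𝒜]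

lemma key_elem (hG : IsGelfandGraded 𝒜) {a b : R} (ha : a ∈ 𝒜 0) (hb : b ∈ 𝒜 0)
    (hab : a + b = 1) :
    ∃ x ∈ 𝒜 0, ∃ y ∈ 𝒜 0, (1 + a * x) * (1 + b * y) = 0 := by
  by_contra hcon
  push_neg at hcon
  set S : Set R := {s | ∃ x ∈ 𝒜 0, ∃ y ∈ 𝒜 0, s = (1 + a * x) * (1 + b * y)} with hSdef
  have hmul : ∀ s ∈ S, ∀ t ∈ S, s * t ∈ S := by
    rintro s ⟨x, hx, y, hy, rfl⟩ t ⟨x', hx', y', hy', rfl⟩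
    refine ⟨x + x' + a * (x * x'), ?_, y + y' + b * (y * y'), ?_, by ring⟩
    · refine add_mem (add_mem hx hx') ?_
      simpa using SetLike.mul_mem_graded ha (SetLike.mul_mem_graded hx hx')
    · refine add_mem (add_mem hy hy') ?_
      simpa using SetLike.mul_mem_graded hb (SetLike.mul_mem_graded hy hy')
  have h1S : (1:R) ∈ S := ⟨0, zero_mem _, 0, zero_mem _, by ring⟩
  have h0S : (0:R) ∉ S := by
    rintro ⟨x, hx, y, hy, h⟩
    exact hcon x hx y hy h.symm
  obtain ⟨P, hP, hPS⟩ := exists_gradedPrime_disjoint 𝒜 S hmul h1S h0S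
  set π : R → R := fun w => (decompose 𝒜 w 0 : R) with hπ
  have hπmem : ∀ w : R, π w ∈ 𝒜 0 := fun w => SetLike.coe_mem _
  have hπP : ∀ w ∈ P, π w ∈ P := fun w hw => hP.1 0 hw
  have hπadd : ∀ u v : R, π (u + v) = π u + π v := by
    intro u v
    simp [hπ, DirectSum.decompose_add, DirectSum.add_apply]
  have hπ1 : π (1 : R) = 1 := DirectSum.decompose_of_mem_same 𝒜 SetLike.GradedOne.one_mem
  have hπmul : ∀ (c e : R), e ∈ 𝒜 0 → π (c * e) = π c * e := by
    intro c e he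
    have h := DirectSum.coe_decompose_mul_add_of_right_mem (𝒜 := 𝒜) (a := c) (i := (0:G)) he
    rw [zero_add] at h
    exact h
  have key : ∀ e : R, e ∈ 𝒜 0 → (∀ x ∈ 𝒜 0, (1 + e * x) ∈ S) →
      P ⊔ Ideal.span {e} ≠ ⊤ := by
    intro e he heS htop
    have h1 : (1:R) ∈ P ⊔ Ideal.span {e} := htop ▸ Submodule.mem_top
    obtain ⟨p, hp, z, hz, hpz⟩ := Submodule.mem_sup.mp h1
    obtain ⟨c, hc⟩ := Ideal.mem_span_singleton'.mp hz
    rw [← hc] at hpz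
    have hππ : π p + π c * e = 1 := by
      have h2 := congrArg π hpz
      rwa [hπadd, hπmul c e he, hπ1] at h2
    have hmemS : (1 + e * (-(π c))) ∈ S := heS _ (neg_mem (hπmem c))
    have hmemP : (1 + e * (-(π c))) ∈ P := by
      have heq : 1 + e * (-(π c)) = π p := by linear_combination - hππ
      rw [heq]
      exact hπP p hp
    exact hPS _ hmemS hmemP
  have haS : ∀ x ∈ 𝒜 0, (1 + a * x) ∈ S := fun x hx => ⟨x, hx, 0, zero_mem _, by ring⟩
  have hbS : ∀ y ∈ 𝒜 0, (1 + b * y) ∈ S := fun y hy => ⟨0, zero_mem _, y, hy, by ring⟩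
  have hhom : ∀ e : R, e ∈ 𝒜 0 → (P ⊔ Ideal.span {e}).IsHomogeneous 𝒜 := by
    intro e he
    refine hP.1.sup (Ideal.homogeneous_span 𝒜 {e} ?_)
    rintro x hx
    rw [Set.mem_singleton_iff] at hx
    subst hx; exact ⟨0, he⟩
  obtain ⟨M, hM, hPM⟩ := exists_gradedMaximal_ge 𝒜 (hhom a ha) (key a ha haS)
  obtain ⟨M', hM', hPM'⟩ := exists_gradedMaximal_ge 𝒜 (hhom b hb) (key b hb hbS)
  obtain ⟨N, hN, hNuniq⟩ := hG P hP
  have hMN : M = N := hNuniq M ⟨hM, le_trans le_sup_left hPM⟩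
  have hM'N : M' = N := hNuniq M' ⟨hM', le_trans le_sup_left hPM'⟩
  have haM : a ∈ M := hPM (Ideal.mem_sup_right (Ideal.subset_span (Set.mem_singleton a)))
  have hbM' : b ∈ M' := hPM' (Ideal.mem_sup_right (Ideal.subset_span (Set.mem_singleton b)))
  apply hN.1.2.1
  rw [Ideal.eq_top_iff_one, ← hab]
  exact Ideal.add_mem _ (hMN ▸ haM) (hM'N ▸ hbM')

end Key

section Statements

variable {G : Type*} [AddGroup G] [DecidableEq G] {R : Type*} [CommRing R]
variable (𝒜 : G → AddSubgroup R) [GradedRing 𝒜]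

open DirectSum in
theorem stmt_5 : IsGelfandGraded 𝒜 ↔
    ∀ F F' : Set (GMax 𝒜 : Set (GSpec 𝒜)), IsClosed F → IsClosed F' → Disjoint F F' →
      ∃ r r' : R, SetLike.IsHomogeneousElem 𝒜 r ∧ SetLike.IsHomogeneousElem 𝒜 r' ∧ r * r' = 0 ∧
        (∀ M ∈ F, r ∉ (M : GSpec 𝒜).1) ∧ ∀ M' ∈ F', r' ∉ (M' : GSpec 𝒜).1 := by
  constructor
  · intro hG F F' hF hF' hdisj
    obtain ⟨C, hC, hFeq⟩ := isClosed_induced_iff.mp hF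
    obtain ⟨C', hC', hF'eq⟩ := isClosed_induced_iff.mp hF'
    obtain ⟨I, hI, rfl⟩ := isClosed_eq_Vg 𝒜 hC
    obtain ⟨I', hI', rfl⟩ := isClosed_eq_Vg 𝒜 hC'
    have htop : I ⊔ I' = ⊤ := by
      by_contra h
      obtain ⟨N, hN, hle⟩ := exists_gradedMaximal_ge 𝒜 (hI.sup hI') h
      have hNg : IsGradedPrime 𝒜 N := gradedMaximal_isGradedPrime 𝒜 hN
      have hmemF : (⟨⟨N, hNg⟩, hN⟩ : GMax 𝒜) ∈ F := by
        rw [← hFeq]; exact le_trans le_sup_left hle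
      have hmemF' : (⟨⟨N, hNg⟩, hN⟩ : GMax 𝒜) ∈ F' := by
        rw [← hF'eq]; exact le_trans le_sup_right hle
      exact Set.disjoint_left.mp hdisj hmemF hmemF'
    have h1 : (1:R) ∈ I ⊔ I' := htop ▸ Submodule.mem_top
    obtain ⟨i, hi, j, hj, hij⟩ := Submodule.mem_sup.mp h1
    set a : R := (decompose 𝒜 i 0 : R) with hadef
    set b : R := (decompose 𝒜 j 0 : R) with hbdef
    have ha : a ∈ 𝒜 0 := SetLike.coe_mem _
    have hb : b ∈ 𝒜 0 := SetLike.coe_mem _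
    have hsum : a + b = 1 := by
      have h2 : (decompose 𝒜 (i + j) 0 : R) = a + b := by
        rw [DirectSum.decompose_add]
        simp [hadef, hbdef, DirectSum.add_apply]
      rw [hij, DirectSum.decompose_of_mem_same 𝒜
        (SetLike.GradedOne.one_mem : (1:R) ∈ 𝒜 0)] at h2
      exact h2.symm
    have haI : a ∈ I := hI 0 hi
    have hbI' : b ∈ I' := hI' 0 hj
    obtain ⟨x, hx, y, hy, hxy⟩ := key_elem 𝒜 hG ha hb hsum
    refine ⟨1 + a * x, 1 + b * y, ⟨0, add_mem SetLike.GradedOne.one_mem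
      (by simpa using SetLike.mul_mem_graded ha hx)⟩,
      ⟨0, add_mem SetLike.GradedOne.one_mem
      (by simpa using SetLike.mul_mem_graded hb hy)⟩, hxy, ?_, ?_⟩
    · intro M hMF hmem
      have hIle : I ≤ (M : GSpec 𝒜).1 := by rw [← hFeq] at hMF; exact hMF
      have h1M : (1:R) ∈ (M : GSpec 𝒜).1 := by
        have hs := Ideal.sub_mem _ hmem (Ideal.mul_mem_right x _ (hIle haI))
        simpa using hs
      exact (M : GSpec 𝒜).2.2.1 ((Ideal.eq_top_iff_one _).mpr h1M)
    · intro M' hMF' hmem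
      have hIle : I' ≤ (M' : GSpec 𝒜).1 := by rw [← hF'eq] at hMF'; exact hMF'
      have h1M : (1:R) ∈ (M' : GSpec 𝒜).1 := by
        have hs := Ideal.sub_mem _ hmem (Ideal.mul_mem_right y _ (hIle hbI'))
        simpa using hs
      exact (M' : GSpec 𝒜).2.2.1 ((Ideal.eq_top_iff_one _).mpr h1M)
  · intro h P hP
    obtain ⟨M, hM, hPM⟩ := exists_gradedMaximal_ge 𝒜 hP.1 hP.2.1
    refine ⟨M, ⟨hM, hPM⟩, ?_⟩
    rintro M' ⟨hM', hPM'⟩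
    by_contra hne
    have hMg : IsGradedPrime 𝒜 M := gradedMaximal_isGradedPrime 𝒜 hM
    have hM'g : IsGradedPrime 𝒜 M' := gradedMaximal_isGradedPrime 𝒜 hM'
    set m : GMax 𝒜 := ⟨⟨M, hMg⟩, hM⟩ with hmdef
    set m' : GMax 𝒜 := ⟨⟨M', hM'g⟩, hM'⟩ with hm'def
    have hclosed : ∀ (N : Ideal R) (hNp : IsGradedPrime 𝒜 N) (hNm : IsGradedMaximal 𝒜 N),
        IsClosed ({(⟨⟨N, hNp⟩, hNm⟩ : GMax 𝒜)} : Set (GMax 𝒜)) := by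
      intro N hNp hNm
      rw [isClosed_induced_iff]
      refine ⟨{P : GSpec 𝒜 | N ≤ P.1}, isClosed_Vg 𝒜 hNp.1, ?_⟩
      ext Q
      simp only [Set.mem_singleton_iff, Set.mem_preimage, Set.mem_setOf_eq]
      constructor
      · intro hle
        have hQN : (Q : GSpec 𝒜).1 = N := hNm.2.2 _ (Q : GSpec 𝒜).2.1 hle (Q : GSpec 𝒜).2.2.1
        exact Subtype.ext (Subtype.ext hQN)
      · rintro rfl; exact le_rfl
    have hmne : m ≠ m' := by
      intro hEq
      exact hne (congrArg (fun t : GMax 𝒜 => (t : GSpec 𝒜).1) hEq).symm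
    obtain ⟨r, r', hr, hr', hrr', hFr, hFr'⟩ := h {m} {m'}
      (hclosed M hMg hM) (hclosed M' hM'g hM')
      (Set.disjoint_singleton.mpr hmne)
    have h0P : r * r' ∈ P := hrr' ▸ P.zero_mem
    rcases hP.2.2 r r' hr hr' h0P with hrP | hr'P
    · exact hFr m rfl (hPM hrP)
    · exact hFr' m' rfl (hPM' hr'P)

end Statements
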